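/- Let R ⊆ T be an inclusion of commutative ℂ-algebras such that R is a direct summand of T as an R-module. If T is a simple module over its ring of differential operators 𝒟(T), then R is a simple module over its ring of differential operators 𝒟(R). -/
import Mathlib

set_option linter.unusedSectionVars false

/-- Grothendieck differential operators of order ≤ n on a commutative `k`-algebra `R`:
order ≤ 0 means `R`-linear (i.e. multiplication by an element after evaluation at `1`), and
order ≤ n+1 means all commutators with multiplication operators have order ≤ n. -/
def IsDiffOp (k R : Type*) [CommSemiring k] [CommRing R] [Algebra k R] :
    ℕ → Module.End k R → Prop
  | 0 => fun D => ∀ r x : R, D (r * x) = r * D x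
  | n + 1 => fun D => ∀ r : R,
      IsDiffOp k R n (D * Algebra.lmul k R r - Algebra.lmul k R r * D)

/-- `R` is D-simple: `R` is a simple module over its ring of differential operators, i.e. the
only subspaces stable under all differential operators are `0` and `R`. -/
def DSimple (k R : Type*) [CommSemiring k] [CommRing R] [Algebra k R] : Prop :=
  Nontrivial R ∧ ∀ I : Submodule k R,
    (∀ (n : ℕ) (D : Module.End k R), IsDiffOp k R n D → ∀ x ∈ I, D x ∈ I) →
    I = ⊥ ∨ I = ⊤

section Aux

variable {k R : Type*} [CommSemiring k] [CommRing R] [Algebra k R]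

lemma isDiffOp_zero (n : ℕ) : IsDiffOp k R n 0 := by
  induction n with
  | zero => intro r x; simp
  | succ n ih =>
    intro r
    rw [show (0 : Module.End k R) * Algebra.lmul k R r - Algebra.lmul k R r * 0 = 0 by simp]
    exact ih

lemma isDiffOp_add {n : ℕ} {D E : Module.End k R} (hD : IsDiffOp k R n D)
    (hE : IsDiffOp k R n E) : IsDiffOp k R n (D + E) := by
  induction n generalizing D E with
  | zero =>
    intro r x
    simp only [LinearMap.add_apply, hD r x, hE r x, mul_add]
  | succ n ih =>
    intro r
    rw [show (D + E) * Algebra.lmul k R r - Algebra.lmul k R r * (D + E)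
      = (D * Algebra.lmul k R r - Algebra.lmul k R r * D)
        + (E * Algebra.lmul k R r - Algebra.lmul k R r * E) by noncomm_ring]
    exact ih (hD r) (hE r)

lemma isDiffOp_comp : ∀ (N m n : ℕ) (D E : Module.End k R), m + n ≤ N →
    IsDiffOp k R m D → IsDiffOp k R n E → IsDiffOp k R (m + n) (D * E) := by
  intro N
  induction N with
  | zero =>
    intro m n D E hle hD hE
    obtain ⟨rfl, rfl⟩ : m = 0 ∧ n = 0 := by omega
    intro r x
    simp only [Module.End.mul_apply, hE r x, hD r (E x)]
  | succ N ih =>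
    intro m n D E hle hD hE
    match m, n with
    | 0, 0 =>
      intro r x
      simp only [Module.End.mul_apply, hE r x, hD r (E x)]
    | 0, n + 1 =>
      rw [show (0:ℕ) + (n + 1) = n + 1 by omega]
      intro r
      have hDc : D * Algebra.lmul k R r - Algebra.lmul k R r * D = 0 := by
        ext x
        simp [Module.End.mul_apply, hD r x]
      rw [show D * E * Algebra.lmul k R r - Algebra.lmul k R r * (D * E)
        = D * (E * Algebra.lmul k R r - Algebra.lmul k R r * E)
          + (D * Algebra.lmul k R r - Algebra.lmul k R r * D) * E by
        ext x
        simp only [Module.End.mul_apply, LinearMap.sub_apply, LinearMap.add_apply,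
          Algebra.coe_lmul_eq_mul, LinearMap.mul_apply', map_sub]
        abel,
        hDc, zero_mul, add_zero]
      have := ih 0 n D (E * Algebra.lmul k R r - Algebra.lmul k R r * E)
        (by omega) hD (hE r)
      rw [show (0:ℕ) + n = n by omega] at this
      exact this
    | m + 1, n =>
      rw [show m + 1 + n = (m + n) + 1 by omega]
      intro r
      rw [show D * E * Algebra.lmul k R r - Algebra.lmul k R r * (D * E)
        = D * (E * Algebra.lmul k R r - Algebra.lmul k R r * E)
          + (D * Algebra.lmul k R r - Algebra.lmul k R r * D) * E by
        ext x
        simp only [Module.End.mul_apply, LinearMap.sub_apply, LinearMap.add_apply,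
          Algebra.coe_lmul_eq_mul, LinearMap.mul_apply', map_sub]
        abel]
      have h1 : IsDiffOp k R (m + n)
          ((D * Algebra.lmul k R r - Algebra.lmul k R r * D) * E) :=
        ih m n _ E (by omega) (hD r) hE
      have h2 : IsDiffOp k R (m + n)
          (D * (E * Algebra.lmul k R r - Algebra.lmul k R r * E)) := by
        match n, hE with
        | 0, hE =>
          have hEc : E * Algebra.lmul k R r - Algebra.lmul k R r * E = 0 := by
            ext x
            simp [Module.End.mul_apply, hE r x]
          rw [hEc, mul_zero]
          exact isDiffOp_zero _
        | n + 1, hE =>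
          have := ih (m + 1) n D (E * Algebra.lmul k R r - Algebra.lmul k R r * E)
            (by omega) hD (hE r)
          rw [show m + 1 + n = m + (n + 1) by omega] at this
          exact this
      exact isDiffOp_add h2 h1

end Aux

section Pull

variable {R T : Type*} [CommRing R] [CommRing T] [Algebra ℂ R] [Algebra ℂ T]
    [Algebra R T] [IsScalarTower ℂ R T] (π : T →ₗ[R] R)

/-- Pull back a differential operator on `T` to one on `R` using the projection `π`. -/
noncomputable def pullOp (D : Module.End ℂ T) : Module.End ℂ R :=
  (π.restrictScalars ℂ) ∘ₗ D ∘ₗ ((Algebra.linearMap R T).restrictScalars ℂ)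

@[simp] lemma pullOp_apply (D : Module.End ℂ T) (r : R) :
    pullOp π D r = π (D (algebraMap R T r)) := rfl

lemma pi_mul (r : R) (t : T) : π (algebraMap R T r * t) = r * π t := by
  rw [← Algebra.smul_def, map_smul, smul_eq_mul]

lemma isDiffOp_pull : ∀ (n : ℕ) (D : Module.End ℂ T), IsDiffOp ℂ T n D →
    IsDiffOp ℂ R n (pullOp π D) := by
  intro n
  induction n with
  | zero =>
    intro D hD r x
    simp only [pullOp_apply, map_mul, hD (algebraMap R T r) (algebraMap R T x), pi_mul]
  | succ n ih =>
    intro D hD r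
    have key : pullOp π D * Algebra.lmul ℂ R r - Algebra.lmul ℂ R r * pullOp π D
        = pullOp π (D * Algebra.lmul ℂ T (algebraMap R T r)
            - Algebra.lmul ℂ T (algebraMap R T r) * D) := by
      ext x
      simp only [Module.End.mul_apply, LinearMap.sub_apply, pullOp_apply,
        Algebra.coe_lmul_eq_mul, LinearMap.mul_apply', map_sub, map_mul, pi_mul]
    rw [key]
    exact ih _ (hD (algebraMap R T r))

end Pull

/-- Smith's descent: Let `R ⊆ T` be commutative ℂ-algebras such that `R` is a
direct summand of `T` as an `R`-module (there is an `R`-linear projection `π : T → R` restricting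
to the identity on `R`).  If `T` is a simple module over its ring of differential operators,
then so is `R`. -/
theorem stmt_8 {R T : Type*} [CommRing R] [CommRing T] [Algebra ℂ R] [Algebra ℂ T]
    [Algebra R T] [IsScalarTower ℂ R T]
    (hinj : Function.Injective (algebraMap R T))
    (π : T →ₗ[R] R) (hπ : ∀ r : R, π (algebraMap R T r) = r)
    (hT : DSimple ℂ T) : DSimple ℂ R := by
  obtain ⟨hTnt, hTsimp⟩ := hT
  have hRnt : Nontrivial R := by
    refine ⟨0, 1, fun h => ?_⟩
    have := congrArg (algebraMap R T) h
    rw [map_zero, map_one] at this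
    exact zero_ne_one this
  refine ⟨hRnt, fun I hI => ?_⟩
  by_cases hbot : I = ⊥
  · exact Or.inl hbot
  · right
    obtain ⟨x, hxI, hx0⟩ := (Submodule.ne_bot_iff I).1 hbot
    -- the smallest 𝒟(T)-stable submodule of T containing algebraMap x
    set S : Set (Submodule ℂ T) :=
      {J | (∀ (n : ℕ) (D : Module.End ℂ T), IsDiffOp ℂ T n D → ∀ s ∈ J, D s ∈ J) ∧
        algebraMap R T x ∈ J} with hS
    set J : Submodule ℂ T := sInf S with hJ
    have hJx : algebraMap R T x ∈ J := Submodule.mem_sInf.2 fun p hp => hp.2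
    have hJstable : ∀ (n : ℕ) (D : Module.End ℂ T), IsDiffOp ℂ T n D →
        ∀ s ∈ J, D s ∈ J := fun n D hD s hs =>
      Submodule.mem_sInf.2 fun p hp => hp.1 n D hD s (Submodule.mem_sInf.1 hs p hp)
    have hJtop : J = ⊤ := by
      rcases hTsimp J hJstable with h | h
      · exfalso
        apply hx0
        apply hinj
        rw [map_zero]
        simpa [h] using hJx
      · exact h
    -- the submodule of elements of T all of whose 𝒟(T)-images project into I
    set K : Submodule ℂ T :=
      { carrier := {s | ∀ (n : ℕ) (D : Module.End ℂ T), IsDiffOp ℂ T n D → π (D s) ∈ I}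
        add_mem' := by
          intro a b ha hb n D hD
          rw [map_add, map_add]
          exact I.add_mem (ha n D hD) (hb n D hD)
        zero_mem' := by
          intro n D hD
          rw [map_zero, map_zero]
          exact I.zero_mem
        smul_mem' := by
          intro c a ha n D hD
          rw [map_smul, LinearMap.map_smul_of_tower]
          exact I.smul_mem c (ha n D hD) } with hK
    have hKS : K ∈ S := by
      constructor
      · intro m D hD s hs n E hE
        have := hs (n + m) (E * D) (isDiffOp_comp (n + m) n m E D le_rfl hE hD)
        simpa [Module.End.mul_apply] using this
      · intro n D hD
        have := hI n (pullOp π D) (isDiffOp_pull π n D hD) x hxI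
        simpa using this
    have hJK : J ≤ K := sInf_le hKS
    have h1K : (1 : T) ∈ K := hJK (hJtop ▸ Submodule.mem_top)
    have h1I : (1 : R) ∈ I := by
      have hid : IsDiffOp ℂ T 0 (1 : Module.End ℂ T) := by
        intro r x
        simp
      have := h1K 0 1 hid
      rw [Module.End.one_apply] at this
      rw [show π (1 : T) = 1 by rw [← map_one (algebraMap R T), hπ]] at this
      exact this
    rw [Submodule.eq_top_iff']
    intro r
    have hmul : IsDiffOp ℂ R 0 (Algebra.lmul ℂ R r) := by
      intro a y
      simp only [Algebra.coe_lmul_eq_mul, LinearMap.mul_apply']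
      ring
    have := hI 0 (Algebra.lmul ℂ R r) hmul 1 h1I
    simpa using this
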